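/- If α and β are standard updates and α ∼ β, then α and β have the same domain: for every state model S, the domain of the relation α_S equals the domain of β_S. -/
import Mathlib


structure StateModel (Agent Atom : Type) where
  World : Type
  rel : Agent → World → World → Prop
  val : Atom → World → Prop

def IsBisim {Agent Atom : Type} (S T : StateModel Agent Atom)
    (R : S.World → T.World → Prop) : Prop :=
  ∀ s t, R s t →
    (∀ p, S.val p s ↔ T.val p t) ∧
    (∀ A s', S.rel A s s' → ∃ t', T.rel A t t' ∧ R s' t') ∧
    (∀ A t', T.rel A t t' → ∃ s', S.rel A s s' ∧ R s' t')

def IsTotalBisim {Agent Atom : Type} (S T : StateModel Agent Atom)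
    (R : S.World → T.World → Prop) : Prop :=
  IsBisim S T R ∧ (∀ s, ∃ t, R s t) ∧ (∀ t, ∃ s, R s t)

/-- An update: an operation on state models together with a transition relation
from each model into its update. -/
structure Update (Agent Atom : Type) where
  model : StateModel Agent Atom → StateModel Agent Atom
  rel : (S : StateModel Agent Atom) → S.World → (model S).World → Prop

/-- Updates α and β are equivalent if for every total bisimulation `R` between `S`
and `T`, the relation `(α_S)⁻¹ ; R ; β_T` is a total bisimulation between `S(α)`
and `T(β)`. -/
def UpdEquiv {Agent Atom : Type} (α β : Update Agent Atom) : Prop :=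
  ∀ (S T : StateModel Agent Atom) (R : S.World → T.World → Prop),
    IsTotalBisim S T R →
    IsTotalBisim (α.model S) (β.model T)
      (fun x y => ∃ s t, α.rel S s x ∧ R s t ∧ β.rel T t y)


/-- An update is standard if the converse of each update relation is a partial
function: each target state has at most one source. -/
def Update.Standard {Agent Atom : Type} (α : Update Agent Atom) : Prop :=
  ∀ (S : StateModel Agent Atom) (t : (α.model S).World) (s s' : S.World),
    α.rel S s t → α.rel S s' t → s = s'

theorem equiv_standard_updates_same_domain {Agent Atom : Type}
    (α β : Update Agent Atom) (hα : α.Standard) (hβ : β.Standard)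
    (hαβ : UpdEquiv α β) :
    ∀ (S : StateModel Agent Atom) (s : S.World),
      (∃ t, α.rel S s t) ↔ (∃ t, β.rel S s t) := by
  intro S s
  have hId : IsTotalBisim S S (fun a b => a = b) := by
    refine ⟨fun a b hab => ?_, fun a => ⟨a, rfl⟩, fun a => ⟨a, rfl⟩⟩
    subst hab
    exact ⟨fun p => Iff.rfl, fun A s' h => ⟨s', h, rfl⟩, fun A t' h => ⟨t', h, rfl⟩⟩
  obtain ⟨_, htot1, htot2⟩ := hαβ S S _ hId
  constructor
  · rintro ⟨x, hx⟩
    obtain ⟨y, s', t', hs', heq, ht'⟩ := htot1 x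
    subst heq
    exact ⟨y, hα S x s' s hs' hx ▸ ht'⟩
  · rintro ⟨y, hy⟩
    obtain ⟨x, s', t', hs', heq, ht'⟩ := htot2 y
    subst heq
    exact ⟨x, hβ S y s' s ht' hy ▸ hs'⟩
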